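/- Let η = Σ_{i∈I} A_i ⊗ B_i be an (m_A·m_B)×(m_A·m_B) Hermitian positive-definite complex matrix, where ⊗ is the Kronecker product, {A_i : i ∈ I} is a linearly independent family of m_A×m_A matrices, and {B_i : i ∈ I} is a linearly independent family of m_B×m_B matrices. If |I| > (m_B − 1)² + 1, then every m_B×m_B complex matrix O_B satisfying η · (1 ⊗ O_B) = (1 ⊗ O_B)ᴴ · η is a scalar multiple of the identity. -/

import Mathlib

open scoped ComplexOrder Matrix Kronecker

/-- Combinatorial lemma: if `d` is non-constant on `Fin n`, the number of pairs `(p,q)` with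
`d p = d q` is at most `(n-1)^2 + 1`. -/
lemma aux_card_filter_le {n : ℕ} (d : Fin n → ℂ) (p0 q0 : Fin n) (h : d p0 ≠ d q0) :
    (Finset.univ.filter (fun pq : Fin n × Fin n => d pq.1 = d pq.2)).card ≤ (n - 1) ^ 2 + 1 := by
  classical
  set C : Finset (Fin n) := Finset.univ.filter (fun p => d p = d p0) with hC
  set Cc : Finset (Fin n) := Finset.univ.filter (fun p => ¬ d p = d p0) with hCc
  have hsub : (Finset.univ.filter (fun pq : Fin n × Fin n => d pq.1 = d pq.2))
      ⊆ C ×ˢ C ∪ Cc ×ˢ Cc := by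
    intro pq hpq
    simp only [Finset.mem_filter, Finset.mem_univ, true_and] at hpq
    by_cases hp : d pq.1 = d p0
    · apply Finset.mem_union_left
      simp [Finset.mem_product, hC, hp, ← hpq]
    · apply Finset.mem_union_right
      simp [Finset.mem_product, hCc, hp, ← hpq]
  have hcard : (Finset.univ.filter (fun pq : Fin n × Fin n => d pq.1 = d pq.2)).card
      ≤ C.card * C.card + Cc.card * Cc.card := by
    calc _ ≤ (C ×ˢ C ∪ Cc ×ˢ Cc).card := Finset.card_le_card hsub
    _ ≤ (C ×ˢ C).card + (Cc ×ˢ Cc).card := Finset.card_union_le _ _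
    _ = _ := by rw [Finset.card_product, Finset.card_product]
  have hab : C.card + Cc.card = n := by
    rw [Finset.card_filter_add_card_filter_not]; simp
  have ha : 1 ≤ C.card := Finset.card_pos.mpr ⟨p0, by simp [hC]⟩
  have hb : 1 ≤ Cc.card := Finset.card_pos.mpr ⟨q0, by simp [hCc, Ne.symm h]⟩
  obtain ⟨b', hb'⟩ : ∃ b', Cc.card = b' + 1 := ⟨Cc.card - 1, by omega⟩
  have hn : n - 1 = C.card + b' := by omega
  rw [hn]
  set a := C.card
  nlinarith [hcard, sq_nonneg (a + b')]

theorem stmt_9 (mA mB : ℕ) (ι : Type) [Fintype ι]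
    (A : ι → Matrix (Fin mA) (Fin mA) ℂ) (B : ι → Matrix (Fin mB) (Fin mB) ℂ)
    (hA : LinearIndependent ℂ A) (hB : LinearIndependent ℂ B)
    (hη : (∑ i, A i ⊗ₖ B i).PosDef)
    (hcard : (mB - 1) ^ 2 + 1 < Fintype.card ι)
    (OB : Matrix (Fin mB) (Fin mB) ℂ)
    (hQH : (∑ i, A i ⊗ₖ B i) * ((1 : Matrix (Fin mA) (Fin mA) ℂ) ⊗ₖ OB)
        = ((1 : Matrix (Fin mA) (Fin mA) ℂ) ⊗ₖ OB)ᴴ * (∑ i, A i ⊗ₖ B i)) :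
    ∃ c : ℂ, OB = c • (1 : Matrix (Fin mB) (Fin mB) ℂ) := by
  classical
  have hι : Nonempty ι := Fintype.card_pos_iff.mp (by omega)
  -- dispose of degenerate `mA = 0`
  rcases Nat.eq_zero_or_pos mA with hmA | hmA
  · exfalso
    obtain ⟨i⟩ := hι
    apply hA.ne_zero i
    ext a b; exact absurd a.isLt (by omega)
  -- dispose of degenerate `mB = 0`
  rcases Nat.eq_zero_or_pos mB with hmB | hmB
  · refine ⟨0, ?_⟩
    ext p q; exact absurd p.isLt (by omega)
  -- Step A : each `B i` intertwines `OB`.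
  have hsum : (∑ i, A i ⊗ₖ (B i * OB)) = ∑ i, A i ⊗ₖ (OBᴴ * B i) := by
    have h1 : (∑ i, A i ⊗ₖ B i) * ((1 : Matrix (Fin mA) (Fin mA) ℂ) ⊗ₖ OB)
        = ∑ i, A i ⊗ₖ (B i * OB) := by
      rw [Finset.sum_mul]
      refine Finset.sum_congr rfl fun i _ => ?_
      rw [← Matrix.mul_kronecker_mul, mul_one]
    have h2 : ((1 : Matrix (Fin mA) (Fin mA) ℂ) ⊗ₖ OB)ᴴ * (∑ i, A i ⊗ₖ B i)
        = ∑ i, A i ⊗ₖ (OBᴴ * B i) := by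
      have hct : ((1 : Matrix (Fin mA) (Fin mA) ℂ) ⊗ₖ OB)ᴴ
          = (1 : Matrix (Fin mA) (Fin mA) ℂ) ⊗ₖ OBᴴ := by
        ext ⟨a, p⟩ ⟨b, q⟩
        simp [Matrix.conjTranspose_apply, Matrix.kroneckerMap_apply, Matrix.one_apply,
          eq_comm, apply_ite (starRingEnd ℂ)]
      rw [hct, Finset.mul_sum]
      refine Finset.sum_congr rfl fun i _ => ?_
      rw [← Matrix.mul_kronecker_mul, one_mul]
    rw [← h1, ← h2, hQH]
  have stepA : ∀ i, B i * OB = OBᴴ * B i := by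
    intro i
    have key : ∀ (p q : Fin mB) (j : ι), (B j * OB) p q - (OBᴴ * B j) p q = 0 := by
      intro p q
      refine Fintype.linearIndependent_iff.mp hA
        (fun j => (B j * OB) p q - (OBᴴ * B j) p q) ?_
      ext a b
      have := congrFun (congrFun hsum (a, p)) (b, q)
      simp only [Matrix.sum_apply, Matrix.kroneckerMap_apply] at this
      simp only [Matrix.sum_apply, Matrix.smul_apply, Pi.smul_apply, smul_eq_mul,
        Matrix.zero_apply, sub_mul, Finset.sum_sub_distrib]
      rw [sub_eq_zero]
      calc ∑ j, (B j * OB) p q * A j a b = ∑ j, A j a b * (B j * OB) p q := by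
            simp [mul_comm]
        _ = ∑ j, A j a b * (OBᴴ * B j) p q := this
        _ = ∑ j, (OBᴴ * B j) p q * A j a b := by simp [mul_comm]
    ext p q
    exact sub_eq_zero.mp (key p q i)
  -- Step B : a positive definite metric at the `B` level.
  set a0 : Fin mA := ⟨0, hmA⟩ with ha0
  set ηB : Matrix (Fin mB) (Fin mB) ℂ := ∑ i, (A i a0 a0) • B i with hηBdef
  have hent : ∀ p q, ηB p q = (∑ i, A i ⊗ₖ B i) (a0, p) (a0, q) := by
    intro p q
    simp [hηBdef, Matrix.sum_apply, Matrix.kroneckerMap_apply]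
  have hηB : ηB.PosDef := by
    rw [Matrix.posDef_iff_dotProduct_mulVec]
    constructor
    · ext p q
      have h1 := congrFun (congrFun hη.1 (a0, p)) (a0, q)
      simp only [Matrix.conjTranspose_apply] at h1 ⊢
      rw [hent, hent, ← h1]
    · intro x hx
      set w : Fin mA × Fin mB → ℂ := fun ap => if ap.1 = a0 then x ap.2 else 0 with hw
      have hwne : w ≠ 0 := by
        obtain ⟨p, hp⟩ := Function.ne_iff.mp hx
        have hp' : x p ≠ 0 := by simpa using hp
        exact Function.ne_iff.mpr ⟨(a0, p), by simp [hw, hp']⟩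
      have hval : dotProduct (star x) (ηB *ᵥ x)
          = dotProduct (star w) ((∑ i, A i ⊗ₖ B i) *ᵥ w) := by
        have hmv : ∀ ap : Fin mA × Fin mB, ((∑ i, A i ⊗ₖ B i) *ᵥ w) ap
            = ∑ q, (∑ i, A i ⊗ₖ B i) ap (a0, q) * x q := by
          intro ap
          simp only [Matrix.mulVec, dotProduct, hw]
          rw [Fintype.sum_prod_type]
          rw [Finset.sum_eq_single a0]
          · exact Finset.sum_congr rfl fun q _ => by simp
          · intro b _ hb; simp [hb]
          · intro h; exact absurd (Finset.mem_univ a0) h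
        simp only [dotProduct, Pi.star_apply, hmv]
        rw [Fintype.sum_prod_type]
        rw [Finset.sum_eq_single a0]
        · refine Finset.sum_congr rfl fun p _ => ?_
          simp only [hw, if_pos rfl]
          congr 1
          simp only [Matrix.mulVec, dotProduct]
          exact Finset.sum_congr rfl fun q _ => by rw [hent]
        · intro b _ hb; simp [hw, hb]
        · intro h; exact absurd (Finset.mem_univ a0) h
      rw [hval]
      exact (Matrix.posDef_iff_dotProduct_mulVec.mp hη).2 hwne
  have hQHB : ηB * OB = OBᴴ * ηB := by
    rw [hηBdef, Finset.sum_mul, Finset.mul_sum]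
    refine Finset.sum_congr rfl fun i _ => ?_
    rw [Matrix.smul_mul, Matrix.mul_smul, stepA i]
  -- Step C : diagonalize `OB` with real eigenvalues.
  obtain ⟨P, P', d, hPP', hP'P, hd, hOB⟩ :
      ∃ (P P' : Matrix (Fin mB) (Fin mB) ℂ) (d : Fin mB → ℂ),
        P * P' = 1 ∧ P' * P = 1 ∧ (∀ p, star (d p) = d p) ∧
          OB = P * Matrix.diagonal d * P' := by
    obtain ⟨S, hSS, hSH⟩ : ∃ S : Matrix (Fin mB) (Fin mB) ℂ, S * S = ηB ∧ S.IsHermitian :=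
      open scoped MatrixOrder in
      ⟨CFC.sqrt ηB, CFC.sqrt_mul_sqrt_self ηB hηB.posSemidef.nonneg,
        (Matrix.nonneg_iff_posSemidef.mp (CFC.sqrt_nonneg ηB)).1⟩
    have hdet : IsUnit S.det := by
      rw [isUnit_iff_ne_zero]
      intro h0
      have : ηB.det = 0 := by rw [← hSS, Matrix.det_mul, h0, mul_zero]
      exact hηB.det_pos.ne' this
    have hSS' : S * S⁻¹ = 1 := Matrix.mul_nonsing_inv S hdet
    have hS'S : S⁻¹ * S = 1 := Matrix.nonsing_inv_mul S hdet
    have hS'H : (S⁻¹).IsHermitian := hSH.inv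
    have e1 : S * S * OB = OBᴴ * (S * S) := by rw [hSS]; exact hQHB
    have hMH : (S * OB * S⁻¹).IsHermitian := by
      show (S * OB * S⁻¹)ᴴ = S * OB * S⁻¹
      rw [Matrix.conjTranspose_mul, Matrix.conjTranspose_mul, hS'H, hSH]
      have h2 := congrArg (fun X => S⁻¹ * (X * S⁻¹)) e1
      simp only [mul_assoc] at h2 ⊢
      rw [Matrix.nonsing_inv_mul_cancel_left _ _ hdet, hSS', mul_one] at h2
      exact h2.symm
    refine ⟨S⁻¹ * (hMH.eigenvectorUnitary : Matrix (Fin mB) (Fin mB) ℂ),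
      (star (hMH.eigenvectorUnitary : Matrix (Fin mB) (Fin mB) ℂ)) * S,
      fun p => (hMH.eigenvalues p : ℂ), ?_, ?_, ?_, ?_⟩
    · have hu : (hMH.eigenvectorUnitary : Matrix (Fin mB) (Fin mB) ℂ)
          * star (hMH.eigenvectorUnitary : Matrix (Fin mB) (Fin mB) ℂ) = 1 :=
        Matrix.mem_unitaryGroup_iff.mp hMH.eigenvectorUnitary.2
      calc S⁻¹ * ↑(hMH.eigenvectorUnitary) * (star ↑(hMH.eigenvectorUnitary) * S)
          = S⁻¹ * (↑(hMH.eigenvectorUnitary) * star ↑(hMH.eigenvectorUnitary)) * S := by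
            simp only [mul_assoc]
        _ = 1 := by rw [hu, mul_one, hS'S]
    · have hu : star (hMH.eigenvectorUnitary : Matrix (Fin mB) (Fin mB) ℂ)
          * (hMH.eigenvectorUnitary : Matrix (Fin mB) (Fin mB) ℂ) = 1 :=
        Matrix.mem_unitaryGroup_iff'.mp hMH.eigenvectorUnitary.2
      calc star ↑(hMH.eigenvectorUnitary) * S * (S⁻¹ * ↑(hMH.eigenvectorUnitary))
          = star ↑(hMH.eigenvectorUnitary) * (S * S⁻¹) * ↑(hMH.eigenvectorUnitary) := by
            simp only [mul_assoc]
        _ = 1 := by rw [hSS', mul_one, hu]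
    · intro p
      simp [Complex.star_def, Complex.conj_ofReal]
    · have hspec := hMH.spectral_theorem
      have hdiag : Matrix.diagonal (fun p => (hMH.eigenvalues p : ℂ))
          = Matrix.diagonal (RCLike.ofReal ∘ hMH.eigenvalues) := rfl
      calc OB = S⁻¹ * (S * OB * S⁻¹) * S := by
            rw [mul_assoc, Matrix.nonsing_inv_mul_cancel_right _ _ hdet,
              Matrix.nonsing_inv_mul_cancel_left _ _ hdet]
        _ = S⁻¹ * (↑(hMH.eigenvectorUnitary) * Matrix.diagonal (RCLike.ofReal ∘ hMH.eigenvalues)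
              * star ↑(hMH.eigenvectorUnitary)) * S := by
              exact congrArg (fun X => S⁻¹ * X * S) (hspec.trans rfl)
        _ = S⁻¹ * ↑(hMH.eigenvectorUnitary) * Matrix.diagonal (fun p => (hMH.eigenvalues p : ℂ))
              * (star ↑(hMH.eigenvectorUnitary) * S) := by
            rw [hdiag]; simp only [mul_assoc]
  -- Step D : either `d` is constant (and we win) or count dimensions.
  by_cases hdc : ∀ p q : Fin mB, d p = d q
  · refine ⟨d ⟨0, hmB⟩, ?_⟩
    have : Matrix.diagonal d = d ⟨0, hmB⟩ • (1 : Matrix (Fin mB) (Fin mB) ℂ) := by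
      ext p q
      by_cases hpq : p = q
      · subst hpq; simp [Matrix.diagonal_apply_eq, hdc p ⟨0, hmB⟩]
      · simp [Matrix.diagonal_apply_ne _ hpq, Matrix.one_apply_ne hpq]
    rw [hOB, this, Matrix.mul_smul, Matrix.smul_mul, mul_one, hPP']
  · exfalso
    push_neg at hdc
    obtain ⟨p0, q0, hpq⟩ := hdc
    have hPc : Pᴴ * P'ᴴ = 1 := by
      rw [← Matrix.conjTranspose_mul, hP'P, Matrix.conjTranspose_one]
    have hPc2 : P'ᴴ * Pᴴ = 1 := by
      rw [← Matrix.conjTranspose_mul, hPP', Matrix.conjTranspose_one]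
    have hDH : (Matrix.diagonal d)ᴴ = Matrix.diagonal d := by
      rw [Matrix.diagonal_conjTranspose]
      exact congrArg Matrix.diagonal (funext fun p => hd p)
    set Y : ι → Matrix (Fin mB) (Fin mB) ℂ := fun i => Pᴴ * B i * P with hY
    have hYD : ∀ i, Y i * Matrix.diagonal d = Matrix.diagonal d * Y i := by
      intro i
      have h3 := congrArg (fun X => Pᴴ * X * P) (stepA i)
      simp only [hOB, Matrix.conjTranspose_mul, hDH, mul_assoc] at h3
      rw [hP'P, mul_one] at h3
      rw [← mul_assoc Pᴴ P'ᴴ _, hPc, one_mul] at h3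
      simp only [hY, mul_assoc]
      exact h3
    have hsupp : ∀ i p q, d p ≠ d q → Y i p q = 0 := by
      intro i p q hne
      have h5 := congrFun (congrFun (hYD i) p) q
      rw [Matrix.mul_diagonal, Matrix.diagonal_mul] at h5
      by_contra h0
      exact hne (mul_left_cancel₀ h0 (by rw [h5, mul_comm])).symm
    have hYli : LinearIndependent ℂ Y := by
      rw [Fintype.linearIndependent_iff]
      intro g hg
      have h4 : Pᴴ * (∑ i, g i • B i) * P = 0 := by
        calc Pᴴ * (∑ i, g i • B i) * P = ∑ i, g i • (Pᴴ * B i * P) := by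
              rw [Finset.mul_sum, Finset.sum_mul]
              exact Finset.sum_congr rfl fun i _ => by
                rw [Matrix.mul_smul, Matrix.smul_mul]
          _ = 0 := hg
      have hsum0 : (∑ i, g i • B i) = 0 := by
        have h6 := congrArg (fun X => P'ᴴ * X * P') h4
        simp only [mul_assoc, Matrix.mul_zero, Matrix.zero_mul] at h6
        rw [hPP', mul_one, ← mul_assoc, hPc2, one_mul] at h6
        exact h6
      exact Fintype.linearIndependent_iff.mp hB g hsum0
    set E : Finset (Fin mB × Fin mB) :=
      Finset.univ.filter (fun pq : Fin mB × Fin mB => d pq.1 = d pq.2) with hE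
    have hEcard : E.card ≤ (mB - 1) ^ 2 + 1 := aux_card_filter_le d p0 q0 hpq
    have hli2 : LinearIndependent ℂ
        (fun i => (fun e : {x // x ∈ E} => Y i e.1.1 e.1.2)) := by
      rw [Fintype.linearIndependent_iff]
      intro g hg
      refine Fintype.linearIndependent_iff.mp hYli g ?_
      ext p q
      by_cases hdp : d p = d q
      · have h7 := congrFun hg ⟨(p, q), by simp [hE, hdp]⟩
        simpa [Matrix.sum_apply] using h7
      · simp [Matrix.sum_apply, hsupp _ p q hdp]
    have hcard2 : Fintype.card ι ≤ E.card := by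
      have h8 := hli2.fintype_card_le_finrank
      rwa [Module.finrank_fintype_fun_eq_card, Fintype.card_coe] at h8
    omega
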